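/- arXiv:2103.04072 — 3 statements merged into one kernel-verified Lean document; each statement's English description precedes it below -/
import Mathlib

section
/- The function f₅(r) = (1 + (1-r²)·artanh(r)/r)/√(1-r²) is strictly increasing and convex on (0,1), with limit 2 as r→0⁺ and tending to ∞ as r→1⁻. -/
open Real Set Filter Topology

noncomputable def artanh (r : ℝ) : ℝ := (1/2) * Real.log ((1+r)/(1-r))

lemma artanh_zero : _root_.artanh 0 = 0 := by simp [_root_.artanh]

lemma artanh_hasDerivAt {r : ℝ} (h1 : -1 < r) (h2 : r < 1) :
    HasDerivAt _root_.artanh (1/(1-r^2)) r := by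
  have h1' : (0:ℝ) < 1 + r := by linarith
  have h2' : (0:ℝ) < 1 - r := by linarith
  have hu : HasDerivAt (fun x : ℝ => 1 + x) 1 r := by
    simpa using (hasDerivAt_id r).const_add 1
  have hv : HasDerivAt (fun x : ℝ => 1 - x) (-1) r := by
    simpa using (hasDerivAt_id r).const_sub 1
  have hq := hu.div hv h2'.ne'
  have hl := (Real.hasDerivAt_log (div_pos h1' h2').ne').comp r hq
  have := hl.const_mul (1/2 : ℝ)
  have h3 : (0:ℝ) < 1 - r^2 := by nlinarith
  refine this.congr_deriv (Eq.symm ?_)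
  field_simp
  ring

lemma u_hasDerivAt {x : ℝ} (h1 : -1 < x) (h2 : x < 1) :
    HasDerivAt (fun x : ℝ => x/(1-x^2) - _root_.artanh x) (2*x^2/(1-x^2)^2) x := by
  have h3 : (0:ℝ) < 1 - x^2 := by nlinarith
  have hv : HasDerivAt (fun y : ℝ => 1 - y^2) (-(2*x)) x := by
    simpa using (hasDerivAt_pow 2 x).const_sub 1
  have hq := (hasDerivAt_id x).div hv h3.ne'
  have := hq.sub (artanh_hasDerivAt h1 h2)
  refine this.congr_deriv (Eq.symm ?_)
  simp only [id]
  field_simp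
  ring

lemma h_hasDerivAt {x : ℝ} (h1 : -1 < x) (h2 : x < 1) :
    HasDerivAt (fun x : ℝ => _root_.artanh x - x - x^3/3) (x^4/(1-x^2)) x := by
  have h3 : (0:ℝ) < 1 - x^2 := by nlinarith
  have hp : HasDerivAt (fun y : ℝ => y + y^3/3) (1 + x^2) x := by
    have := (hasDerivAt_id x).add ((hasDerivAt_pow 3 x).div_const 3)
    refine this.congr_deriv (Eq.symm ?_)
    push_cast; ring
  have := ((artanh_hasDerivAt h1 h2).sub hp)
  have h4 : x^4/(1-x^2) = 1/(1-x^2) - (1+x^2) := by field_simp; ring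
  rw [h4]
  refine this.congr_of_eventuallyEq (Filter.Eventually.of_forall fun y => ?_)
  simp only [Pi.sub_apply]; ring

lemma artanh_lt {r : ℝ} (h0 : 0 < r) (h1 : r < 1) : _root_.artanh r < r/(1-r^2) := by
  have hmono : StrictMonoOn (fun x : ℝ => x/(1-x^2) - _root_.artanh x) (Ico 0 1) := by
    apply strictMonoOn_of_hasDerivWithinAt_pos (convex_Ico 0 1)
    · intro x hx
      exact (u_hasDerivAt (by linarith [hx.1] : (-1:ℝ) < x) hx.2).continuousAt.continuousWithinAt
    · rw [interior_Ico]
      intro x hx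
      exact ((u_hasDerivAt (by linarith [hx.1]) hx.2).hasDerivWithinAt)
    · rw [interior_Ico]
      intro x hx
      have h3 : (0:ℝ) < 1 - x^2 := by nlinarith [hx.1, hx.2]
      have h4 : (0:ℝ) < x^2 := pow_pos hx.1 2
      positivity
  have := hmono (by constructor <;> norm_num) ⟨h0.le, h1⟩ h0
  simp only [_root_.artanh_zero] at this
  norm_num at this
  linarith

lemma artanh_ge {r : ℝ} (h0 : 0 ≤ r) (h1 : r < 1) : r + r^3/3 ≤ _root_.artanh r := by
  have hmono : MonotoneOn (fun x : ℝ => _root_.artanh x - x - x^3/3) (Ico 0 1) := by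
    apply monotoneOn_of_hasDerivWithinAt_nonneg (convex_Ico 0 1)
    · intro x hx
      exact (h_hasDerivAt (by linarith [hx.1] : (-1:ℝ) < x) hx.2).continuousAt.continuousWithinAt
    · rw [interior_Ico]
      intro x hx
      exact ((h_hasDerivAt (by linarith [hx.1]) hx.2).hasDerivWithinAt)
    · rw [interior_Ico]
      intro x hx
      have h3 : (0:ℝ) < 1 - x^2 := by nlinarith [hx.1, hx.2]
      positivity
  have := hmono (by constructor <;> norm_num) ⟨h0, h1⟩ h0
  simp only [_root_.artanh_zero] at this
  norm_num at this
  linarith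

lemma F_hasDerivAt {r : ℝ} (h0 : 0 < r) (h1 : r < 1) :
    HasDerivAt (fun x : ℝ => (1 + (1 - x^2) * _root_.artanh x / x) / Real.sqrt (1 - x^2))
      ((r/(1-r^2) - _root_.artanh r)/(r^2 * Real.sqrt (1-r^2))) r := by
  have h3 : (0:ℝ) < 1 - r^2 := by nlinarith
  have hs : 0 < Real.sqrt (1 - r^2) := Real.sqrt_pos.mpr h3
  have hs2 : Real.sqrt (1 - r^2)^2 = 1 - r^2 := Real.sq_sqrt h3.le
  have hv : HasDerivAt (fun y : ℝ => 1 - y^2) (-(2*r)) r := by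
    simpa using (hasDerivAt_pow 2 r).const_sub 1
  have hsq : HasDerivAt (fun x : ℝ => Real.sqrt (1 - x^2))
      (1/(2 * Real.sqrt (1-r^2)) * (-(2*r))) r :=
    (Real.hasDerivAt_sqrt h3.ne').comp r hv
  have hA : HasDerivAt (fun x : ℝ => (1-x^2) * _root_.artanh x)
      (-(2*r) * _root_.artanh r + (1-r^2) * (1/(1-r^2))) r :=
    hv.mul (artanh_hasDerivAt (by linarith) h1)
  have hB := hA.div (hasDerivAt_id r) h0.ne'
  have hnum := hB.const_add 1
  have hF := hnum.div hsq hs.ne'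
  have hr' := h0.ne'
  have hs' := hs.ne'
  refine hF.congr_deriv (Eq.symm ?_)
  simp only [id, Pi.div_apply]
  generalize hq : Real.sqrt (1 - r^2) = s at hs2 hs' ⊢
  rw [← hs2]
  field_simp
  linear_combination (-(r - s^2*_root_.artanh r)) * hs2

lemma G_hasDerivAt {r : ℝ} (h0 : 0 < r) (h1 : r < 1) :
    HasDerivAt (fun x : ℝ => (x/(1-x^2) - _root_.artanh x)/(x^2 * Real.sqrt (1-x^2)))
      ((2*r^4/(1-r^2) - (r/(1-r^2) - _root_.artanh r)*(r*(2-3*r^2))) /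
        (r^4*(1-r^2)*Real.sqrt (1-r^2))) r := by
  have h3 : (0:ℝ) < 1 - r^2 := by nlinarith
  have hs : 0 < Real.sqrt (1 - r^2) := Real.sqrt_pos.mpr h3
  have hs2 : Real.sqrt (1 - r^2)^2 = 1 - r^2 := Real.sq_sqrt h3.le
  have hv : HasDerivAt (fun y : ℝ => 1 - y^2) (-(2*r)) r := by
    simpa using (hasDerivAt_pow 2 r).const_sub 1
  have hsq : HasDerivAt (fun x : ℝ => Real.sqrt (1 - x^2))
      (1/(2 * Real.sqrt (1-r^2)) * (-(2*r))) r :=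
    (Real.hasDerivAt_sqrt h3.ne').comp r hv
  have hN := u_hasDerivAt (by linarith : (-1:ℝ) < r) h1
  have hD : HasDerivAt (fun x : ℝ => x^2 * Real.sqrt (1-x^2))
      ((↑2 * r^1) * Real.sqrt (1-r^2) + r^2 * (1/(2 * Real.sqrt (1-r^2)) * (-(2*r)))) r :=
    (hasDerivAt_pow 2 r).mul hsq
  have hG := hN.div hD (by positivity : r^2 * Real.sqrt (1-r^2) ≠ 0)
  have hr' := h0.ne'
  have hs' := hs.ne'
  refine hG.congr_deriv (Eq.symm ?_)
  generalize hq : Real.sqrt (1 - r^2) = s at hs2 hs' ⊢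
  rw [← hs2]
  field_simp
  linear_combination (2*(r - s^2*_root_.artanh r)) * hs2

noncomputable def ellipticK (r : ℝ) : ℝ :=
  ∫ t in (0:ℝ)..(π/2), (1 - r^2 * Real.sin t ^ 2) ^ (-(1/2) : ℝ)

noncomputable def ellipticE (r : ℝ) : ℝ :=
  ∫ t in (0:ℝ)..(π/2), (1 - r^2 * Real.sin t ^ 2) ^ ((1/2) : ℝ)

theorem stmt3 :
    StrictMonoOn (fun r : ℝ => (1 + (1 - r^2) * _root_.artanh r / r) / Real.sqrt (1 - r^2)) (Ioo 0 1) ∧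
    ConvexOn ℝ (Ioo 0 1) (fun r : ℝ => (1 + (1 - r^2) * _root_.artanh r / r) / Real.sqrt (1 - r^2)) ∧
    Tendsto (fun r : ℝ => (1 + (1 - r^2) * _root_.artanh r / r) / Real.sqrt (1 - r^2)) (𝓝[>] 0) (𝓝 2) ∧
    Tendsto (fun r : ℝ => (1 + (1 - r^2) * _root_.artanh r / r) / Real.sqrt (1 - r^2)) (𝓝[<] 1) atTop := by
  have hcont : ContinuousOn
      (fun r : ℝ => (1 + (1 - r^2) * _root_.artanh r / r) / Real.sqrt (1 - r^2)) (Ioo 0 1) :=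
    fun r hr => ((F_hasDerivAt hr.1 hr.2).continuousAt).continuousWithinAt
  refine ⟨?_, ?_, ?_, ?_⟩
  · -- strict monotonicity
    apply strictMonoOn_of_hasDerivWithinAt_pos (f' := fun x : ℝ =>
        (x/(1-x^2) - _root_.artanh x)/(x^2 * Real.sqrt (1-x^2))) (convex_Ioo 0 1) hcont
    · rw [interior_Ioo]
      intro x hx
      exact (F_hasDerivAt hx.1 hx.2).hasDerivWithinAt
    · rw [interior_Ioo]
      intro x hx
      have h3 : (0:ℝ) < 1 - x^2 := by nlinarith [hx.1, hx.2]
      have hN : 0 < x/(1-x^2) - _root_.artanh x := sub_pos.mpr (artanh_lt hx.1 hx.2)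
      have hden : 0 < x^2 * Real.sqrt (1-x^2) := by
        have := Real.sqrt_pos.mpr h3
        have := pow_pos hx.1 2
        positivity
      exact div_pos hN hden
  · -- convexity
    apply convexOn_of_hasDerivWithinAt2_nonneg (convex_Ioo 0 1) hcont
      (f' := fun x : ℝ => (x/(1-x^2) - _root_.artanh x)/(x^2 * Real.sqrt (1-x^2)))
      (f'' := fun x : ℝ => (2*x^4/(1-x^2) - (x/(1-x^2) - _root_.artanh x)*(x*(2-3*x^2))) /
        (x^4*(1-x^2)*Real.sqrt (1-x^2)))
    · rw [interior_Ioo]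
      intro x hx
      exact (F_hasDerivAt hx.1 hx.2).hasDerivWithinAt
    · rw [interior_Ioo]
      intro x hx
      exact (G_hasDerivAt hx.1 hx.2).hasDerivWithinAt
    · rw [interior_Ioo]
      intro x hx
      have h3 : (0:ℝ) < 1 - x^2 := by nlinarith [hx.1, hx.2]
      have hs : 0 < Real.sqrt (1-x^2) := Real.sqrt_pos.mpr h3
      have hx2 : 0 < x^2 := pow_pos hx.1 2
      have hN0 : 0 ≤ x/(1-x^2) - _root_.artanh x := (sub_pos.mpr (artanh_lt hx.1 hx.2)).le
      have hart := artanh_ge hx.1.le hx.2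
      have hNle : (x/(1-x^2) - _root_.artanh x) * (1-x^2) ≤ x^3*(2+x^2)/3 := by
        have heq : (x/(1-x^2) - _root_.artanh x) * (1-x^2) = x - _root_.artanh x * (1-x^2) := by
          field_simp
        rw [heq]
        nlinarith [hart, h3]
      have hM0 : 0 ≤ (x/(1-x^2) - _root_.artanh x) * (1-x^2) := mul_nonneg hN0 h3.le
      have hnum : 0 ≤ 2*x^4/(1-x^2) - (x/(1-x^2) - _root_.artanh x)*(x*(2-3*x^2)) := by
        rw [sub_nonneg, le_div_iff₀ h3]
        rcases le_or_gt (2-3*x^2) 0 with h|h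
        · nlinarith [mul_nonneg (mul_nonneg hM0 hx.1.le) (neg_nonneg.mpr h),
            pow_pos hx.1 4]
        · nlinarith [mul_le_mul_of_nonneg_right hNle (mul_nonneg hx.1.le h.le),
            pow_pos hx.1 4, sq_nonneg (x^2), sq_nonneg (x^3), pow_pos hx.1 2]
      apply div_nonneg hnum
      positivity
  · -- limit at 0
    have hslope : Tendsto (fun r : ℝ => _root_.artanh r / r) (𝓝[>] 0) (𝓝 1) := by
      have h : HasDerivAt _root_.artanh (1/(1-(0:ℝ)^2)) 0 := artanh_hasDerivAt (by norm_num) (by norm_num)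
      rw [hasDerivAt_iff_tendsto_slope] at h
      have h' : Tendsto (slope _root_.artanh 0) (𝓝[>] 0) (𝓝 (1/(1-(0:ℝ)^2))) :=
        h.mono_left (nhdsWithin_mono 0 (fun x hx => ne_of_gt hx))
      have heq : ∀ r : ℝ, slope _root_.artanh 0 r = _root_.artanh r / r := by
        intro r; simp [slope_def_field, _root_.artanh_zero]
      norm_num at h'
      exact h'.congr heq
    have t1 : Tendsto (fun r : ℝ => 1 - r^2) (𝓝[>] 0) (𝓝 1) := by
      have h : Tendsto (fun r : ℝ => 1 - r^2) (𝓝 (0:ℝ)) (𝓝 (1 - (0:ℝ)^2)) :=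
        Continuous.tendsto (by continuity) 0
      norm_num at h
      exact h.mono_left nhdsWithin_le_nhds
    have t2 : Tendsto (fun r : ℝ => (1 - r^2) * (_root_.artanh r / r)) (𝓝[>] 0) (𝓝 1) := by
      have := t1.mul hslope
      norm_num at this
      exact this
    have t3 : Tendsto (fun r : ℝ => 1 + (1 - r^2) * _root_.artanh r / r) (𝓝[>] 0) (𝓝 2) := by
      have h : Tendsto (fun r : ℝ => 1 + (1 - r^2) * (_root_.artanh r / r)) (𝓝[>] 0)
          (𝓝 (1 + 1)) := Tendsto.add tendsto_const_nhds t2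
      norm_num at h
      simpa only [mul_div_assoc] using h
    have t4 : Tendsto (fun r : ℝ => Real.sqrt (1 - r^2)) (𝓝[>] 0) (𝓝 1) := by
      have h : Tendsto (fun r : ℝ => Real.sqrt (1 - r^2)) (𝓝 (0:ℝ))
          (𝓝 (Real.sqrt (1 - (0:ℝ)^2))) := Continuous.tendsto (by continuity) 0
      norm_num at h
      exact h.mono_left nhdsWithin_le_nhds
    have := t3.div t4 one_ne_zero
    norm_num at this
    exact this
  · -- limit at 1
    have hmem : Ioo (0:ℝ) 1 ∈ 𝓝[<] (1:ℝ) :=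
      Ioo_mem_nhdsLT_of_mem (by constructor <;> norm_num)
    have hsq_to : Tendsto (fun r : ℝ => Real.sqrt (1-r^2)) (𝓝[<] 1) (𝓝[>] 0) := by
      rw [tendsto_nhdsWithin_iff]
      constructor
      · have h : Tendsto (fun r : ℝ => Real.sqrt (1 - r^2)) (𝓝 (1:ℝ))
            (𝓝 (Real.sqrt (1 - (1:ℝ)^2))) := Continuous.tendsto (by continuity) 1
        norm_num at h
        exact h.mono_left nhdsWithin_le_nhds
      · filter_upwards [hmem] with r hr
        have h3 : (0:ℝ) < 1 - r^2 := by nlinarith [hr.1, hr.2]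
        exact Real.sqrt_pos.mpr h3
    have hinv : Tendsto (fun r : ℝ => (Real.sqrt (1-r^2))⁻¹) (𝓝[<] 1) atTop :=
      tendsto_inv_nhdsGT_zero.comp hsq_to
    apply tendsto_atTop_mono' _ _ hinv
    filter_upwards [hmem] with r hr
    have h3 : (0:ℝ) < 1 - r^2 := by nlinarith [hr.1, hr.2]
    have hs : 0 < Real.sqrt (1-r^2) := Real.sqrt_pos.mpr h3
    have hart : 0 ≤ _root_.artanh r := by nlinarith [artanh_ge hr.1.le hr.2, hr.1]
    have hnum : (1:ℝ) ≤ 1 + (1 - r^2) * _root_.artanh r / r := by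
      have : 0 ≤ (1 - r^2) * _root_.artanh r / r := div_nonneg (mul_nonneg h3.le hart) hr.1.le
      linarith
    calc (Real.sqrt (1-r^2))⁻¹ = 1 / Real.sqrt (1-r^2) := (one_div _).symm
      _ ≤ (1 + (1 - r^2) * _root_.artanh r / r) / Real.sqrt (1-r^2) := by gcongr
end

section
/- The function f₇(r) = log(artanh(r)/r)/r² is strictly increasing on (0,1), with limit 1/3 as r→0⁺ and tending to ∞ as r→1⁻. -/
open Real Set Filter Topology

lemma hasDerivAt_artanh {t : ℝ} (h1 : -1 < t) (h2 : t < 1) :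
    HasDerivAt _root_.artanh (1/(1-t^2)) t := by
  have h1' : (0:ℝ) < 1 + t := by linarith
  have h2' : (0:ℝ) < 1 - t := by linarith
  have hnum : HasDerivAt (fun r : ℝ => 1 + r) 1 t := (hasDerivAt_id t).const_add 1
  have hden : HasDerivAt (fun r : ℝ => 1 - r) (-1) t := by
    simpa using (hasDerivAt_id t).const_sub 1
  have hd := hnum.div hden h2'.ne'
  have hpos : (0:ℝ) < (1+t)/(1-t) := div_pos h1' h2'
  have hl := hd.log hpos.ne'
  have := hl.const_mul (1/2 : ℝ)
  refine this.congr_deriv ?_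
  have hne : (1:ℝ) - t^2 ≠ 0 := by nlinarith
  rw [Pi.div_apply]
  field_simp
  ring
lemma artanh_pos {t : ℝ} (h1 : 0 < t) (h2 : t < 1) : 0 < _root_.artanh t := by
  have : (1:ℝ) < (1+t)/(1-t) := by
    rw [lt_div_iff₀ (by linarith)]; linarith
  have := Real.log_pos this
  unfold _root_.artanh; positivity
lemma artanh_lb {t : ℝ} (h1 : 0 < t) (h2 : t < 1) :
    t + t^3/3 + t^5/5 + t^7/7 ≤ _root_.artanh t := by
  set F : ℝ → ℝ := fun x => _root_.artanh x - (x + x^3/3 + x^5/5 + x^7/7) with hFdef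
  have hF : ∀ x ∈ Ioo (-1:ℝ) 1, HasDerivAt F (1/(1-x^2) - (1 + x^2 + x^4 + x^6)) x := by
    intro x hx
    exact (hasDerivAt_artanh hx.1 hx.2).sub
      (((hasDerivAt_id x).add (((hasDerivAt_pow 3 x).div_const 3))).add
        ((hasDerivAt_pow 5 x).div_const 5) |>.add ((hasDerivAt_pow 7 x).div_const 7)
        |>.congr_deriv (by ring))
  have hmono : StrictMonoOn F (Ico (0:ℝ) 1) := by
    apply strictMonoOn_of_deriv_pos (convex_Ico 0 1)
    · intro x hx
      exact (hF x ⟨by linarith [hx.1], hx.2⟩).continuousAt.continuousWithinAt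
    · intro x hx
      rw [interior_Ico] at hx
      rw [(hF x ⟨by linarith [hx.1], hx.2⟩).deriv]
      have hx2 : (0:ℝ) < 1 - x^2 := by nlinarith [hx.1, hx.2]
      rw [sub_pos, lt_div_iff₀ hx2]
      nlinarith [pow_pos hx.1 8]
  have := hmono ⟨le_refl 0, one_pos⟩ ⟨h1.le, h2⟩ h1
  have hF0 : F 0 = 0 := by simp [hFdef, _root_.artanh_zero]
  rw [hF0] at this
  simp only [hFdef] at this
  linarith

lemma artanh_ub {t : ℝ} (h1 : 0 < t) (h2 : t ≤ 1/2) :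
    _root_.artanh t ≤ t + t^3/3 + 2*t^5/5 := by
  set G : ℝ → ℝ := fun x => (x + x^3/3 + 2*x^5/5) - _root_.artanh x with hGdef
  have hG : ∀ x ∈ Ioo (-1:ℝ) 1, HasDerivAt G ((1 + x^2 + 2*x^4) - 1/(1-x^2)) x := by
    intro x hx
    exact (((hasDerivAt_id x).add (((hasDerivAt_pow 3 x).div_const 3))).add
        (((hasDerivAt_pow 5 x).const_mul 2).div_const 5) |>.congr_deriv (by ring)).sub
      (hasDerivAt_artanh hx.1 hx.2)
  have hmono : StrictMonoOn G (Icc (0:ℝ) (1/2)) := by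
    apply strictMonoOn_of_deriv_pos (convex_Icc 0 (1/2))
    · intro x hx
      exact (hG x ⟨by linarith [hx.1], by linarith [hx.2]⟩).continuousAt.continuousWithinAt
    · intro x hx
      rw [interior_Icc] at hx
      rw [(hG x ⟨by linarith [hx.1], by linarith [hx.2]⟩).deriv]
      have hx2 : (0:ℝ) < 1 - x^2 := by nlinarith [hx.1, hx.2]
      rw [sub_pos, div_lt_iff₀ hx2]
      have hb : (0:ℝ) < 1 - 2*x^2 := by nlinarith [hx.1, hx.2]
      nlinarith [mul_pos (pow_pos hx.1 4) hb]
  have := hmono ⟨le_refl 0, by norm_num⟩ ⟨h1.le, h2⟩ h1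
  have hG0 : G 0 = 0 := by simp [hGdef, _root_.artanh_zero]
  rw [hG0] at this
  simp only [hGdef] at this
  linarith

lemma keyQ {t A : ℝ} (ht : 0 < t) (ht1 : t < 1) (hA : t + t^3/3 + t^5/5 + t^7/7 ≤ A) :
    0 < 2*(1-t^2)^2*A^2 + t*(3*t^2-1)*A - t^2 := by
  set P : ℝ := t + t^3/3 + t^5/5 + t^7/7 with hP
  have hPt : t ≤ P := by rw [hP]; nlinarith [pow_pos ht 3, pow_pos ht 5, pow_pos ht 7]
  have hQP : 0 < 2*(1-t^2)^2*P^2 + t*(3*t^2-1)*P - t^2 := by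
    have hid : 2*(1-t^2)^2*P^2 + t*(3*t^2-1)*P - t^2
        = (52/45)*t^6 + (184/315)*t^8 + (71/1575)*t^10 + (72/175)*t^12
          + (304/3675)*t^14 + (8/245)*t^16 + (2/49)*t^18 := by
      rw [hP]; ring
    rw [hid]; positivity
  have hsecond : 0 ≤ 2*(1-t^2)^2*(A+P) + t*(3*t^2-1) := by
    have h2t : 2*t ≤ A + P := by linarith
    have hsq : (0:ℝ) ≤ 2*(1-t^2)^2 := by positivity
    have := mul_le_mul_of_nonneg_left h2t hsq
    have hpoly : 0 < t*(3 - 5*t^2 + 4*t^4) := by nlinarith [sq_nonneg (2*t^2 - 5/4), ht]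
    nlinarith
  have hfac : 0 ≤ (A - P) * (2*(1-t^2)^2*(A+P) + t*(3*t^2-1)) :=
    mul_nonneg (by linarith) hsecond
  nlinarith [hQP, hfac]


noncomputable def hh (r : ℝ) : ℝ :=
  r/((1-r^2)*_root_.artanh r) - 1 - 2*Real.log (_root_.artanh r) + 2*Real.log r

lemma hasDerivAt_hh {r : ℝ} (h1 : 0 < r) (h2 : r < 1) :
    HasDerivAt hh
      ((2*(1-r^2)^2*(_root_.artanh r)^2 + r*(3*r^2-1)*(_root_.artanh r) - r^2)
        / (r*((1-r^2)*_root_.artanh r)^2)) r := by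
  have hApos := artanh_pos h1 h2
  have hA := hasDerivAt_artanh (by linarith) h2
  have hr2 : (0:ℝ) < 1 - r^2 := by nlinarith
  have hDpos : 0 < (1-r^2)*_root_.artanh r := mul_pos hr2 hApos
  have hD : HasDerivAt (fun x : ℝ => (1-x^2)*_root_.artanh x)
      ((-(2*r))*_root_.artanh r + (1-r^2)*(1/(1-r^2))) r := by
    exact (((hasDerivAt_pow 2 r).const_sub 1).congr_deriv (by ring)).mul hA
  have hq : HasDerivAt (fun x : ℝ => x/((1-x^2)*_root_.artanh x))
      ((1*((1-r^2)*_root_.artanh r) - r*((-(2*r))*_root_.artanh r + (1-r^2)*(1/(1-r^2))))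
        / ((1-r^2)*_root_.artanh r)^2) r := (hasDerivAt_id r).div hD hDpos.ne'
  have hlA : HasDerivAt (fun x : ℝ => 2*Real.log (_root_.artanh x)) (2*(1/(1-r^2)/_root_.artanh r)) r :=
    (hA.log hApos.ne').const_mul 2
  have hlr : HasDerivAt (fun x : ℝ => 2*Real.log x) (2*r⁻¹) r :=
    (Real.hasDerivAt_log h1.ne').const_mul 2
  have := ((hq.sub_const 1).sub hlA).add hlr
  refine this.congr_deriv ?_
  field_simp
  ring

lemma hasDerivAt_f {r : ℝ} (h1 : 0 < r) (h2 : r < 1) :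
    HasDerivAt (fun x : ℝ => Real.log (_root_.artanh x / x) / x^2) (hh r / r^3) r := by
  have hApos := artanh_pos h1 h2
  have hA := hasDerivAt_artanh (by linarith) h2
  have hr2 : (0:ℝ) < 1 - r^2 := by nlinarith
  have hq : HasDerivAt (fun x : ℝ => _root_.artanh x / x)
      ((1/(1-r^2)*r - _root_.artanh r*1)/r^2) r := hA.div (hasDerivAt_id r) h1.ne'
  have hl := hq.log (div_pos hApos h1).ne'
  have hf := hl.div (hasDerivAt_pow 2 r) (pow_ne_zero 2 h1.ne')
  refine hf.congr_deriv ?_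
  unfold hh
  rw [Real.log_div hApos.ne' h1.ne']
  field_simp
  ring


lemma tendsto_u : Tendsto (fun r : ℝ => _root_.artanh r / r) (𝓝[>] 0) (𝓝 1) := by
  have hmem : Ioo (0:ℝ) (1/2) ∈ 𝓝[>] (0:ℝ) :=
    Ioo_mem_nhdsGT_of_mem ⟨le_refl 0, by norm_num⟩
  apply tendsto_of_tendsto_of_tendsto_of_le_of_le'
    (g := fun r : ℝ => 1 + r^2/3) (h := fun r : ℝ => 1 + r^2)
  · have : Tendsto (fun r : ℝ => 1 + r^2/3) (𝓝 0) (𝓝 (1 + 0^2/3)) :=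
      (continuous_const.add ((continuous_pow 2).div_const 3)).tendsto 0
    simpa using this.mono_left nhdsWithin_le_nhds
  · have : Tendsto (fun r : ℝ => 1 + r^2) (𝓝 0) (𝓝 (1 + 0^2)) :=
      (continuous_const.add (continuous_pow 2)).tendsto 0
    simpa using this.mono_left nhdsWithin_le_nhds
  · filter_upwards [hmem] with r hr
    have h1 := hr.1
    have hlb := artanh_lb h1 (by linarith [hr.2])
    rw [le_div_iff₀ h1]
    nlinarith [pow_pos h1 5, pow_pos h1 7]
  · filter_upwards [hmem] with r hr
    have h1 := hr.1
    have hub := artanh_ub h1 hr.2.le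
    rw [div_le_iff₀ h1]
    have hr2 : r^2 ≤ 1/4 := by nlinarith [hr.2, h1]
    have h53 : r^5 ≤ r^3/4 := by
      nlinarith [mul_le_mul_of_nonneg_left hr2 (pow_pos h1 3).le]
    nlinarith [pow_pos h1 3]

lemma tendsto_hh : Tendsto hh (𝓝[>] 0) (𝓝 0) := by
  have hmem : Ioo (0:ℝ) 1 ∈ 𝓝[>] (0:ℝ) :=
    Ioo_mem_nhdsGT_of_mem ⟨le_refl 0, one_pos⟩
  have heq : (fun r : ℝ => ((1-r^2) * (_root_.artanh r / r))⁻¹ - 1 - 2*Real.log (_root_.artanh r / r))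
      =ᶠ[𝓝[>] 0] hh := by
    filter_upwards [hmem] with r hr
    have hApos := artanh_pos hr.1 hr.2
    unfold hh
    rw [Real.log_div hApos.ne' hr.1.ne']
    have hr0 := hr.1.ne'
    field_simp
    ring
  apply Tendsto.congr' heq
  have h1 : Tendsto (fun r : ℝ => (1-r^2) * (_root_.artanh r / r)) (𝓝[>] 0) (𝓝 1) := by
    have hc : Tendsto (fun r : ℝ => 1 - r^2) (𝓝[>] (0:ℝ)) (𝓝 1) := by
      have : Tendsto (fun r : ℝ => 1 - r^2) (𝓝 0) (𝓝 (1 - 0^2)) :=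
      (continuous_const.sub (continuous_pow 2)).tendsto 0
      simpa using this.mono_left nhdsWithin_le_nhds
    simpa using hc.mul tendsto_u
  have h2 : Tendsto (fun r : ℝ => Real.log (_root_.artanh r / r)) (𝓝[>] 0) (𝓝 0) := by
    have := (Real.continuousAt_log one_ne_zero).tendsto.comp tendsto_u
    simpa [Function.comp_def] using this
  have := ((h1.inv₀ one_ne_zero).sub_const 1).sub (h2.const_mul 2)
  simpa using this

lemma hh_mono : StrictMonoOn hh (Ioo (0:ℝ) 1) := by
  apply strictMonoOn_of_deriv_pos (convex_Ioo 0 1)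
  · exact fun x hx => (hasDerivAt_hh hx.1 hx.2).continuousAt.continuousWithinAt
  · intro x hx
    rw [interior_Ioo] at hx
    rw [(hasDerivAt_hh hx.1 hx.2).deriv]
    have hApos := artanh_pos hx.1 hx.2
    have hr2 : (0:ℝ) < 1 - x^2 := by nlinarith [hx.1, hx.2]
    exact div_pos (keyQ hx.1 hx.2 (artanh_lb hx.1 hx.2))
      (mul_pos hx.1 (pow_pos (mul_pos hr2 hApos) 2))

lemma hh_pos {r : ℝ} (h1 : 0 < r) (h2 : r < 1) : 0 < hh r := by
  have hhalf : r/2 ∈ Ioo (0:ℝ) 1 := ⟨by linarith, by linarith⟩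
  have hr : r ∈ Ioo (0:ℝ) 1 := ⟨h1, h2⟩
  have hlt : hh (r/2) < hh r := hh_mono hhalf hr (by linarith)
  have hge : 0 ≤ hh (r/2) := by
    apply le_of_tendsto tendsto_hh
    filter_upwards [Ioo_mem_nhdsGT_of_mem ⟨le_refl (0:ℝ), hhalf.1⟩] with s hs
    exact (hh_mono ⟨hs.1, lt_trans hs.2 hhalf.2⟩ hhalf hs.2).le
  linarith

lemma part1 : StrictMonoOn (fun r : ℝ => Real.log (_root_.artanh r / r) / r^2) (Ioo 0 1) := by
  apply strictMonoOn_of_deriv_pos (convex_Ioo 0 1)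
  · exact fun x hx => (hasDerivAt_f hx.1 hx.2).continuousAt.continuousWithinAt
  · intro x hx
    rw [interior_Ioo] at hx
    rw [(hasDerivAt_f hx.1 hx.2).deriv]
    exact div_pos (hh_pos hx.1 hx.2) (pow_pos hx.1 3)

lemma log_ge {x : ℝ} (hx : 0 < x) : 1 - x⁻¹ ≤ Real.log x := by
  have := Real.log_le_sub_one_of_pos (inv_pos.2 hx)
  rw [Real.log_inv] at this
  linarith

lemma part2 : Tendsto (fun r : ℝ => Real.log (_root_.artanh r / r) / r^2) (𝓝[>] 0) (𝓝 (1/3)) := by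
  have hmem : Ioo (0:ℝ) (1/2) ∈ 𝓝[>] (0:ℝ) :=
    Ioo_mem_nhdsGT_of_mem ⟨le_refl 0, by norm_num⟩
  apply tendsto_of_tendsto_of_tendsto_of_le_of_le'
    (g := fun r : ℝ => 1/(3+r^2)) (h := fun r : ℝ => 1/3 + 2*r^2/5)
  · have : Tendsto (fun r : ℝ => 1/(3+r^2)) (𝓝 0) (𝓝 (1/(3+0^2))) :=
      (continuous_const.div (continuous_const.add (continuous_pow 2))
        (fun x => (by positivity : (0:ℝ) < 3 + x^2).ne')).tendsto 0
    simpa using this.mono_left nhdsWithin_le_nhds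
  · have : Tendsto (fun r : ℝ => 1/3 + 2*r^2/5) (𝓝 0) (𝓝 (1/3 + 2*0^2/5)) :=
      (continuous_const.add ((continuous_const.mul (continuous_pow 2)).div_const 5)).tendsto 0
    norm_num at this
    exact this.mono_left nhdsWithin_le_nhds
  · -- lower bound
    filter_upwards [hmem] with r hr
    have h1 := hr.1
    have h2 : r < 1 := by linarith [hr.2]
    have hApos := artanh_pos h1 h2
    have hAl : r*(1 + r^2/3) ≤ _root_.artanh r := by
      have := artanh_lb h1 h2
      nlinarith [pow_pos h1 5, pow_pos h1 7]
    have hu : (0:ℝ) < _root_.artanh r / r := div_pos hApos h1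
    have hlog : r^2/(3+r^2) ≤ Real.log (_root_.artanh r / r) := by
      refine le_trans ?_ (log_ge hu)
      rw [inv_div]
      have hb : r / _root_.artanh r ≤ 3/(3+r^2) := by
        rw [div_le_div_iff₀ hApos (by positivity)]
        nlinarith [hAl]
      have hid : (1:ℝ) - 3/(3+r^2) = r^2/(3+r^2) := by
        field_simp
        ring
      linarith [hb, hid]
    calc 1/(3+r^2) = (r^2/(3+r^2))/r^2 := by field_simp
    _ ≤ Real.log (_root_.artanh r / r) / r^2 := by
        apply div_le_div_of_nonneg_right hlog (by positivity) |>.trans_eq rfl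
  · -- upper bound
    filter_upwards [hmem] with r hr
    have h1 := hr.1
    have h2 : r < 1 := by linarith [hr.2]
    have hApos := artanh_pos h1 h2
    have hu : (0:ℝ) < _root_.artanh r / r := div_pos hApos h1
    have hub := artanh_ub h1 hr.2.le
    have hlog : Real.log (_root_.artanh r / r) ≤ r^2/3 + 2*r^4/5 := by
      refine (Real.log_le_sub_one_of_pos hu).trans ?_
      have hdle : _root_.artanh r / r ≤ 1 + r^2/3 + 2*r^4/5 := by
        rw [div_le_iff₀ h1]
        nlinarith [hub]
      linarith
    calc Real.log (_root_.artanh r / r) / r^2 ≤ (r^2/3 + 2*r^4/5)/r^2 := by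
          exact div_le_div_of_nonneg_right hlog (by positivity) |>.trans_eq rfl
    _ = 1/3 + 2*r^2/5 := by field_simp

lemma part3 : Tendsto (fun r : ℝ => Real.log (_root_.artanh r / r) / r^2) (𝓝[<] 1) atTop := by
  have hmem : Ioo (1/2 : ℝ) 1 ∈ 𝓝[<] (1:ℝ) :=
    Ioo_mem_nhdsLT_of_mem ⟨by norm_num, le_refl 1⟩
  have hbot : Tendsto (fun r : ℝ => Real.log (_root_.artanh r)) (𝓝[<] 1) atTop := by
    have h1 : Tendsto (fun r : ℝ => 1 - r) (𝓝[<] (1:ℝ)) (𝓝[>] 0) := by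
      rw [tendsto_nhdsWithin_iff]
      constructor
      · have : Tendsto (fun r : ℝ => 1 - r) (𝓝 1) (𝓝 (1-1)) :=
          (continuous_const.sub continuous_id).tendsto 1
        norm_num at this
        exact this.mono_left nhdsWithin_le_nhds
      · filter_upwards [hmem] with r hr
        simp [mem_Ioi]; linarith [hr.2]
    have h2 : Tendsto (fun r : ℝ => (1 - r)⁻¹) (𝓝[<] (1:ℝ)) atTop :=
      h1.inv_tendsto_nhdsGT_zero
    have h3 : Tendsto (fun r : ℝ => (1+r) * (1-r)⁻¹) (𝓝[<] (1:ℝ)) atTop := by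
      apply Filter.Tendsto.pos_mul_atTop (show (0:ℝ) < 2 by norm_num) ?_ h2
      have : Tendsto (fun r : ℝ => 1 + r) (𝓝 1) (𝓝 (1+1)) :=
        (continuous_const.add continuous_id).tendsto 1
      norm_num at this
      exact this.mono_left nhdsWithin_le_nhds
    have h4 : Tendsto (fun r : ℝ => (1+r)/(1-r)) (𝓝[<] (1:ℝ)) atTop := by
      simpa [div_eq_mul_inv] using h3
    have h5 : Tendsto (fun r : ℝ => _root_.artanh r) (𝓝[<] (1:ℝ)) atTop := by
      unfold _root_.artanh
      exact (Real.tendsto_log_atTop.comp h4).const_mul_atTop (by norm_num)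
    exact Real.tendsto_log_atTop.comp h5
  apply tendsto_atTop_mono' _ _ hbot
  filter_upwards [hmem] with r hr
  have h1 : (0:ℝ) < r := by linarith [hr.1]
  have h2 := hr.2
  have hApos := artanh_pos h1 h2
  have hAr : r ≤ _root_.artanh r := by
    have := artanh_lb h1 h2
    nlinarith [pow_pos h1 3, pow_pos h1 5, pow_pos h1 7]
  have hlogpos : 0 ≤ Real.log (_root_.artanh r / r) := by
    apply Real.log_nonneg
    rw [le_div_iff₀ h1]; linarith
  have hlogr : Real.log r ≤ 0 := Real.log_nonpos h1.le (by linarith)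
  have hsplit : Real.log (_root_.artanh r / r) = Real.log (_root_.artanh r) - Real.log r :=
    Real.log_div hApos.ne' h1.ne'
  have hr2 : 0 < r^2 := by positivity
  have hr21 : r^2 ≤ 1 := by nlinarith
  calc Real.log (_root_.artanh r) ≤ Real.log (_root_.artanh r / r) := by rw [hsplit]; linarith
  _ ≤ Real.log (_root_.artanh r / r) / r^2 := by
      rw [le_div_iff₀ hr2]
      nlinarith [hlogpos]

theorem stmt5 :
    StrictMonoOn (fun r : ℝ => Real.log (_root_.artanh r / r) / r^2) (Ioo 0 1) ∧
    Tendsto (fun r : ℝ => Real.log (_root_.artanh r / r) / r^2) (𝓝[>] 0) (𝓝 (1/3)) ∧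
    Tendsto (fun r : ℝ => Real.log (_root_.artanh r / r) / r^2) (𝓝[<] 1) atTop := by
  exact ⟨part1, part2, part3⟩
end

section
/- The function f₈(r) = [(1-r²)·artanh(r)/(r - (1-r²)·artanh(r))] · log(artanh(r)/r) is strictly decreasing on (0,1), with limit 1/2 as r→0⁺ and 0 as r→1⁻. -/
open Real Set Filter Topology

-- P2 : sinh s < s * cosh s for s > 0
lemma sc_pos {s : ℝ} (hs : 0 < s) : 0 < s * Real.cosh s - Real.sinh s := by
  have key : StrictMonoOn (fun s => s * Real.cosh s - Real.sinh s) (Ici (0:ℝ)) := by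
    have hd : ∀ x : ℝ, HasDerivAt (fun s => s * Real.cosh s - Real.sinh s)
        (x * Real.sinh x) x := by
      intro x
      have h := ((hasDerivAt_id x).mul (Real.hasDerivAt_cosh x)).sub (Real.hasDerivAt_sinh x)
      exact h.congr_deriv (by simp only [id_eq]; ring)
    apply strictMonoOn_of_deriv_pos (convex_Ici 0)
    · exact (Continuous.sub (continuous_id.mul Real.continuous_cosh) Real.continuous_sinh).continuousOn
    · intro x hx
      rw [interior_Ici, mem_Ioi] at hx
      rw [(hd x).deriv]
      exact mul_pos hx (Real.sinh_pos_iff.2 hx)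
  have := key (self_mem_Ici) (le_of_lt hs : (0:ℝ) ≤ s) hs
  simpa using this

lemma ss_pos {s : ℝ} (hs : 0 < s) : 0 < Real.sinh s - s :=
  sub_pos.2 (Real.self_lt_sinh_iff.2 hs)

lemma mlh {f g f' g' : ℝ → ℝ}
    (hf : ∀ x ∈ Ioi (0:ℝ), HasDerivAt f (f' x) x)
    (hg : ∀ x ∈ Ioi (0:ℝ), HasDerivAt g (g' x) x)
    (hf0 : Tendsto f (𝓝[>] (0:ℝ)) (𝓝 0)) (hg0 : Tendsto g (𝓝[>] (0:ℝ)) (𝓝 0))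
    (hg'pos : ∀ x ∈ Ioi (0:ℝ), 0 < g' x)
    (hr : StrictAntiOn (fun x => f' x / g' x) (Ioi (0:ℝ))) :
    StrictAntiOn (fun x => f x / g x) (Ioi (0:ℝ)) := by
  -- g is positive on Ioi 0
  have hgpos : ∀ z ∈ Ioi (0:ℝ), 0 < g z := by
    intro z hz
    obtain ⟨c, hc, hcc⟩ := exists_ratio_hasDerivAt_eq_ratio_slope' g g' hz id (fun _ => 1)
      (fun x hx => hg x hx.1)
      (fun x hx => hasDerivAt_id x)
      hg0 (tendsto_nhdsWithin_of_tendsto_nhds tendsto_id)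
      (((hg z hz).continuousAt.tendsto).mono_left nhdsWithin_le_nhds)
      ((continuousAt_id.tendsto).mono_left nhdsWithin_le_nhds)
    simp only [id, sub_zero, mul_one] at hcc
    have : 0 < g' c := hg'pos c hc.1
    have hz' : (0:ℝ) < z := hz
    nlinarith [mul_pos hz' this, hcc]
  intro x hx y hy hxy
  -- slope from 0 to x equals f'/g' at some c1
  obtain ⟨c₁, hc₁, e₁⟩ := exists_ratio_hasDerivAt_eq_ratio_slope' f f' hx g g'
    (fun t ht => hf t ht.1) (fun t ht => hg t ht.1) hf0 hg0
    (((hf x hx).continuousAt.tendsto).mono_left nhdsWithin_le_nhds)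
    (((hg x hx).continuousAt.tendsto).mono_left nhdsWithin_le_nhds)
  simp only [sub_zero] at e₁
  -- slope from x to y equals f'/g' at some c2
  have hcont : ∀ h : ℝ → ℝ, (∀ t ∈ Ioi (0:ℝ), HasDerivAt h (f' t) t) → True := fun _ _ => trivial
  obtain ⟨c₂, hc₂, e₂⟩ := exists_ratio_hasDerivAt_eq_ratio_slope f f' hxy
    (fun t ht => ((hf t (lt_of_lt_of_le hx ht.1)).continuousAt).continuousWithinAt)
    (fun t ht => hf t (lt_of_lt_of_le hx (le_of_lt ht.1)))
    g g'
    (fun t ht => ((hg t (lt_of_lt_of_le hx ht.1)).continuousAt).continuousWithinAt)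
    (fun t ht => hg t (lt_of_lt_of_le hx (le_of_lt ht.1)))
  -- g y - g x > 0
  have hgyx : 0 < g y - g x := by
    obtain ⟨c₃, hc₃, e₃⟩ := exists_ratio_hasDerivAt_eq_ratio_slope g g' hxy
      (fun t ht => ((hg t (lt_of_lt_of_le hx ht.1)).continuousAt).continuousWithinAt)
      (fun t ht => hg t (lt_of_lt_of_le hx (le_of_lt ht.1)))
      id (fun _ => 1)
      continuousOn_id (fun t _ => hasDerivAt_id t)
    simp only [id, mul_one] at e₃
    have : 0 < g' c₃ := hg'pos c₃ (lt_trans hx hc₃.1)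
    nlinarith [hxy, this, e₃]
  have hgx := hgpos x hx
  have hgy := hgpos y hy
  have hg'c₁ := hg'pos c₁ hc₁.1
  have hg'c₂ := hg'pos c₂ (lt_trans hx hc₂.1)
  -- ratio inequality
  have hrat : f' c₂ / g' c₂ < f' c₁ / g' c₁ := hr hc₁.1 (lt_trans hx hc₂.1) (lt_trans hc₁.2 hc₂.1)
  -- f x / g x = f' c₁ / g' c₁
  have e₁' : f x / g x = f' c₁ / g' c₁ := by
    rw [div_eq_div_iff (ne_of_gt hgx) (ne_of_gt hg'c₁)]
    linarith [e₁]
  -- (f y - f x)/(g y - g x) = f' c₂ / g' c₂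
  have e₂' : (f y - f x) / (g y - g x) = f' c₂ / g' c₂ := by
    rw [div_eq_div_iff (ne_of_gt hgyx) (ne_of_gt hg'c₂)]
    linarith [e₂]
  have key : (f y - f x) / (g y - g x) < f x / g x := by rw [e₁', e₂']; exact hrat
  rw [div_lt_div_iff₀ hgyx hgx] at key
  show f y / g y < f x / g x
  rw [div_lt_div_iff₀ hgy hgx]
  nlinarith [key]

noncomputable def LL (s : ℝ) : ℝ := Real.log (s * (Real.cosh s + 1) / (2 * Real.sinh s))
noncomputable def DD (s : ℝ) : ℝ := (Real.sinh s - s) / s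
noncomputable def AA (s : ℝ) : ℝ := s * Real.sinh s - s ^ 2
noncomputable def BB (s : ℝ) : ℝ := Real.sinh s * (s * Real.cosh s - Real.sinh s)
noncomputable def AA' (s : ℝ) : ℝ := Real.sinh s + s * Real.cosh s - 2 * s
noncomputable def BB' (s : ℝ) : ℝ :=
  Real.cosh s * (s * Real.cosh s - Real.sinh s) + s * Real.sinh s ^ 2

lemma hasDerivAt_AA (s : ℝ) : HasDerivAt AA (AA' s) s := by
  unfold AA AA'
  have h := ((hasDerivAt_id s).mul (Real.hasDerivAt_sinh s)).sub (hasDerivAt_pow 2 s)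
  refine h.congr_deriv (Eq.symm ?_)
  simp only [id_eq, Nat.cast_ofNat, pow_one]
  ring

lemma hasDerivAt_BB (s : ℝ) : HasDerivAt BB (BB' s) s := by
  unfold BB BB'
  have h := (Real.hasDerivAt_sinh s).mul
    (((hasDerivAt_id s).mul (Real.hasDerivAt_cosh s)).sub (Real.hasDerivAt_sinh s))
  refine h.congr_deriv (Eq.symm ?_)
  simp only [id_eq, Pi.sub_apply, Pi.mul_apply]
  ring

lemma hasDerivAt_AA' (s : ℝ) :
    HasDerivAt AA' (2 * Real.cosh s + s * Real.sinh s - 2) s := by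
  unfold AA'
  have h := ((Real.hasDerivAt_sinh s).add
    ((hasDerivAt_id s).mul (Real.hasDerivAt_cosh s))).sub ((hasDerivAt_id s).const_mul 2)
  refine h.congr_deriv (Eq.symm ?_)
  simp only [id_eq]
  ring

lemma hasDerivAt_BB' (s : ℝ) :
    HasDerivAt BB' (4 * s * Real.sinh s * Real.cosh s) s := by
  unfold BB'
  have h := ((Real.hasDerivAt_cosh s).mul
      (((hasDerivAt_id s).mul (Real.hasDerivAt_cosh s)).sub (Real.hasDerivAt_sinh s))).add
    ((hasDerivAt_id s).mul ((Real.hasDerivAt_sinh s).pow 2))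
  refine h.congr_deriv (Eq.symm ?_)
  simp only [id_eq]
  norm_num
  ring

lemma hasDerivAt_DD {s : ℝ} (hs : 0 < s) :
    HasDerivAt DD ((s * Real.cosh s - Real.sinh s) / s ^ 2) s := by
  unfold DD
  have h := ((Real.hasDerivAt_sinh s).sub (hasDerivAt_id s)).div (hasDerivAt_id s) (ne_of_gt hs)
  refine h.congr_deriv (Eq.symm ?_)
  simp only [id_eq, Pi.sub_apply]
  field_simp
  ring

lemma hasDerivAt_LL {s : ℝ} (hs : 0 < s) :
    HasDerivAt LL (1 / s - 1 / Real.sinh s) s := by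
  have hsinh : 0 < Real.sinh s := Real.sinh_pos_iff.2 hs
  have hcosh : 0 < Real.cosh s := Real.cosh_pos s
  have hc1 : 0 < Real.cosh s + 1 := by linarith
  have hinner : 0 < s * (Real.cosh s + 1) / (2 * Real.sinh s) := by positivity
  unfold LL
  have hnum : HasDerivAt (fun s => s * (Real.cosh s + 1)) (Real.cosh s + 1 + s * Real.sinh s) s := by
    have h := (hasDerivAt_id s).mul ((Real.hasDerivAt_cosh s).add_const 1)
    refine h.congr_deriv (Eq.symm ?_)
    simp only [id_eq]
    ring
  have hden : HasDerivAt (fun s => 2 * Real.sinh s) (2 * Real.cosh s) s :=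
    (Real.hasDerivAt_sinh s).const_mul 2
  have hq := hnum.div hden (by positivity)
  have h := hq.log (ne_of_gt hinner)
  refine h.congr_deriv (Eq.symm ?_)
  rw [Pi.div_apply, div_div_div_comm]
  field_simp
  linear_combination s * Real.cosh_sq_sub_sinh_sq s

-- tanh x / x, written as sinh x / (x * cosh x), is antitone on (0,∞)
lemma T_anti : AntitoneOn (fun x => Real.sinh x / (x * Real.cosh x)) (Ioi (0:ℝ)) := by
  have hderiv : ∀ x ∈ Ioi (0:ℝ), HasDerivAt (fun x => Real.sinh x / (x * Real.cosh x))
      ((Real.cosh x * (x * Real.cosh x) - Real.sinh x * (Real.cosh x + x * Real.sinh x))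
        / (x * Real.cosh x) ^ 2) x := by
    intro x hx
    have hx0 : (0:ℝ) < x := hx
    have hne : x * Real.cosh x ≠ 0 := by positivity
    have hden : HasDerivAt (fun x => x * Real.cosh x) (Real.cosh x + x * Real.sinh x) x := by
      have h := (hasDerivAt_id x).mul (Real.hasDerivAt_cosh x)
      refine h.congr_deriv (Eq.symm ?_); simp only [id_eq]; ring
    exact (Real.hasDerivAt_sinh x).div hden hne
  apply antitoneOn_of_deriv_nonpos (convex_Ioi 0)
  · intro x hx
    exact ((hderiv x hx).continuousAt).continuousWithinAt
  · intro x hx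
    rw [interior_Ioi] at hx
    exact (hderiv x hx).differentiableAt.differentiableWithinAt
  · intro x hx
    rw [interior_Ioi] at hx
    have hx0 : (0:ℝ) < x := hx
    rw [(hderiv x hx).deriv]
    apply div_nonpos_of_nonpos_of_nonneg _ (by positivity)
    have h1 : x ≤ Real.sinh x := le_of_lt (Real.self_lt_sinh_iff.2 hx0)
    have h2 : (1:ℝ) ≤ Real.cosh x := Real.one_le_cosh x
    have h3 : 0 < Real.sinh x := Real.sinh_pos_iff.2 hx0
    have key : Real.cosh x ^ 2 = Real.sinh x ^ 2 + 1 := Real.cosh_sq x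
    nlinarith [Real.cosh_pos x]
  done

-- ψ = (2cosh s + s sinh s - 2)/(4 s sinh s cosh s) is strictly antitone on (0,∞)
lemma psi_eq {s : ℝ} (hs : 0 < s) :
    (2 * Real.cosh s + s * Real.sinh s - 2) / (4 * s * Real.sinh s * Real.cosh s)
      = (1 + Real.sinh (s/2) / ((s/2) * Real.cosh (s/2))) * (1 / (4 * Real.cosh s)) := by
  have h2 : s = 2 * (s/2) := by ring
  have hσ : 0 < Real.sinh (s/2) := Real.sinh_pos_iff.2 (by linarith)
  have hc : 0 < Real.cosh (s/2) := Real.cosh_pos _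
  have hC : 0 < Real.cosh s := Real.cosh_pos _
  rw [h2, Real.sinh_two_mul, Real.cosh_two_mul]
  have e : Real.cosh (s/2) ^ 2 = Real.sinh (s/2) ^ 2 + 1 := Real.cosh_sq _
  field_simp
  linear_combination e

lemma psi_anti : StrictAntiOn (fun s =>
    (2 * Real.cosh s + s * Real.sinh s - 2) / (4 * s * Real.sinh s * Real.cosh s)) (Ioi (0:ℝ)) := by
  intro x hx y hy hxy
  have hx0 : (0:ℝ) < x := hx
  have hy0 : (0:ℝ) < y := hy
  simp only
  rw [psi_eq hx0, psi_eq hy0]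
  have hq1x : (0:ℝ) < 1 + Real.sinh (x/2) / ((x/2) * Real.cosh (x/2)) := by positivity
  have hq1y : (0:ℝ) < 1 + Real.sinh (y/2) / ((y/2) * Real.cosh (y/2)) := by positivity
  have hq1 : 1 + Real.sinh (y/2) / ((y/2) * Real.cosh (y/2))
      ≤ 1 + Real.sinh (x/2) / ((x/2) * Real.cosh (x/2)) := by
    have := T_anti (show x/2 ∈ Ioi (0:ℝ) by simpa using by linarith)
      (show y/2 ∈ Ioi (0:ℝ) by simpa using by linarith) (by linarith)
    simpa using this
  have hq2 : 1 / (4 * Real.cosh y) < 1 / (4 * Real.cosh x) := by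
    apply one_div_lt_one_div_of_lt (by positivity)
    have : Real.cosh x < Real.cosh y := by
      rw [Real.cosh_lt_cosh]
      rw [abs_of_pos hx0, abs_of_pos hy0]
      exact hxy
    linarith
  have hq2x : (0:ℝ) < 1 / (4 * Real.cosh x) := by positivity
  have hq2y : (0:ℝ) < 1 / (4 * Real.cosh y) := by positivity
  calc (1 + Real.sinh (y/2) / ((y/2) * Real.cosh (y/2))) * (1 / (4 * Real.cosh y))
      ≤ (1 + Real.sinh (x/2) / ((x/2) * Real.cosh (x/2))) * (1 / (4 * Real.cosh y)) := by
        apply mul_le_mul_of_nonneg_right hq1 (le_of_lt hq2y)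
    _ < (1 + Real.sinh (x/2) / ((x/2) * Real.cosh (x/2))) * (1 / (4 * Real.cosh x)) := by
        apply mul_lt_mul_of_pos_left hq2 hq1x

-- continuity of sinh/cosh combos
lemma tendsto_sinh_div_self : Tendsto (fun s : ℝ => Real.sinh s / s) (𝓝[>] (0:ℝ)) (𝓝 1) := by
  have h := hasDerivAt_iff_tendsto_slope.1 (Real.hasDerivAt_sinh 0)
  rw [Real.cosh_zero] at h
  have h2 : Tendsto (slope Real.sinh 0) (𝓝[>] (0:ℝ)) (𝓝 1) :=
    h.mono_left (nhdsWithin_mono 0 (fun x hx => ne_of_gt hx))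
  apply h2.congr'
  filter_upwards [self_mem_nhdsWithin] with s hs
  simp [slope_def_field, Real.sinh_zero]

lemma tendsto_LL : Tendsto LL (𝓝[>] (0:ℝ)) (𝓝 0) := by
  have hinner : Tendsto (fun s : ℝ => s * (Real.cosh s + 1) / (2 * Real.sinh s))
      (𝓝[>] (0:ℝ)) (𝓝 1) := by
    have h1 : Tendsto (fun s : ℝ => (Real.sinh s / s)⁻¹ * ((Real.cosh s + 1)/2))
        (𝓝[>] (0:ℝ)) (𝓝 1) := by
      have ha := (tendsto_sinh_div_self.inv₀ one_ne_zero)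
      have hb : Tendsto (fun s : ℝ => (Real.cosh s + 1)/2) (𝓝[>] (0:ℝ)) (𝓝 1) := by
        have : Tendsto (fun s : ℝ => (Real.cosh s + 1)/2) (𝓝 (0:ℝ)) (𝓝 ((Real.cosh 0 + 1)/2)) :=
          (((Real.continuous_cosh).add continuous_const).div_const 2).continuousAt
        simpa using this.mono_left nhdsWithin_le_nhds
      simpa using ha.mul hb
    apply h1.congr'
    filter_upwards [self_mem_nhdsWithin] with s hs
    have hs0 : (0:ℝ) < s := hs
    have hsinh : 0 < Real.sinh s := Real.sinh_pos_iff.2 hs0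
    field_simp
  have hlog := (Real.continuousAt_log one_ne_zero).tendsto.comp hinner
  simp only [Real.log_one] at hlog; exact hlog

lemma tendsto_DD : Tendsto DD (𝓝[>] (0:ℝ)) (𝓝 0) := by
  have h : Tendsto (fun s : ℝ => Real.sinh s / s - 1) (𝓝[>] (0:ℝ)) (𝓝 0) := by
    simpa using tendsto_sinh_div_self.sub_const 1
  apply h.congr'
  filter_upwards [self_mem_nhdsWithin] with s hs
  have hs0 : (0:ℝ) < s := hs
  unfold DD
  field_simp

lemma tendsto_AA : Tendsto AA (𝓝[>] (0:ℝ)) (𝓝 0) := by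
  have : Continuous AA := by unfold AA; continuity
  simpa [AA] using (this.tendsto 0).mono_left nhdsWithin_le_nhds

lemma tendsto_BB : Tendsto BB (𝓝[>] (0:ℝ)) (𝓝 0) := by
  have : Continuous BB := by unfold BB; continuity
  simpa [BB] using (this.tendsto 0).mono_left nhdsWithin_le_nhds

lemma tendsto_AA' : Tendsto AA' (𝓝[>] (0:ℝ)) (𝓝 0) := by
  have : Continuous AA' := by unfold AA'; continuity
  simpa [AA'] using (this.tendsto 0).mono_left nhdsWithin_le_nhds

lemma tendsto_BB' : Tendsto BB' (𝓝[>] (0:ℝ)) (𝓝 0) := by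
  have : Continuous BB' := by unfold BB'; continuity
  simpa [BB'] using (this.tendsto 0).mono_left nhdsWithin_le_nhds

lemma BB'_pos {s : ℝ} (hs : 0 < s) : 0 < BB' s := by
  unfold BB'
  have h1 := sc_pos hs
  have h2 := Real.cosh_pos s
  have h3 := Real.sinh_pos_iff.2 hs
  nlinarith

lemma anti_AB' : StrictAntiOn (fun s => AA' s / BB' s) (Ioi (0:ℝ)) := by
  apply mlh (f' := fun s => 2 * Real.cosh s + s * Real.sinh s - 2)
    (g' := fun s => 4 * s * Real.sinh s * Real.cosh s)
    (fun x _ => hasDerivAt_AA' x) (fun x _ => hasDerivAt_BB' x)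
    tendsto_AA' tendsto_BB'
  · intro x hx
    have hx0 : (0:ℝ) < x := hx
    have := Real.sinh_pos_iff.2 hx0
    have := Real.cosh_pos x
    positivity
  · exact psi_anti

lemma anti_AB : StrictAntiOn (fun s => AA s / BB s) (Ioi (0:ℝ)) := by
  apply mlh (f' := AA') (g' := BB')
    (fun x _ => hasDerivAt_AA x) (fun x _ => hasDerivAt_BB x)
    tendsto_AA tendsto_BB (fun x hx => BB'_pos hx) anti_AB'

lemma anti_LD : StrictAntiOn (fun s => LL s / DD s) (Ioi (0:ℝ)) := by
  apply mlh (f' := fun s => 1 / s - 1 / Real.sinh s)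
    (g' := fun s => (s * Real.cosh s - Real.sinh s) / s ^ 2)
    (fun x hx => hasDerivAt_LL hx) (fun x hx => hasDerivAt_DD hx)
    tendsto_LL tendsto_DD
  · intro x hx
    have hx0 : (0:ℝ) < x := hx
    exact div_pos (sc_pos hx0) (by positivity)
  · intro x hx y hy hxy
    have key : ∀ z ∈ Ioi (0:ℝ), (1 / z - 1 / Real.sinh z) / ((z * Real.cosh z - Real.sinh z) / z ^ 2)
        = AA z / BB z := by
      intro z hz
      have hz0 : (0:ℝ) < z := hz
      have hsinh : 0 < Real.sinh z := Real.sinh_pos_iff.2 hz0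
      have hsc := sc_pos hz0
      unfold AA BB
      rw [div_eq_div_iff (by positivity) (by positivity)]
      field_simp
    simp only
    rw [key x hx, key y hy]
    exact anti_AB hx hy hxy


lemma artanh_pos_s6 {r : ℝ} (hr : r ∈ Ioo (0:ℝ) 1) : 0 < _root_.artanh r := by
  have h0 := hr.1
  have h1 := hr.2
  have : (1:ℝ) < (1+r)/(1-r) := by
    rw [lt_div_iff₀ (by linarith)]
    linarith
  unfold _root_.artanh
  have := Real.log_pos this
  linarith

lemma artanh_strictMono : StrictMonoOn _root_.artanh (Ioo (0:ℝ) 1) := by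
  intro x hx y hy hxy
  unfold _root_.artanh
  have hx1 : (0:ℝ) < 1 - x := by linarith [hx.2]
  have hy1 : (0:ℝ) < 1 - y := by linarith [hy.2]
  have h : (1+x)/(1-x) < (1+y)/(1-y) := by
    rw [div_lt_div_iff₀ hx1 hy1]
    nlinarith [hx.1, hy.1]
  have hpos : (0:ℝ) < (1+x)/(1-x) := div_pos (by linarith [hx.1]) hx1
  have := Real.log_lt_log hpos h
  linarith

lemma sinh_two_artanh {r : ℝ} (hr : r ∈ Ioo (0:ℝ) 1) :
    Real.sinh (2 * _root_.artanh r) = 2*r/(1-r^2) := by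
  have h0 := hr.1
  have h1 := hr.2
  have hx : (0:ℝ) < (1+r)/(1-r) := div_pos (by linarith) (by linarith)
  have h2 : 2 * _root_.artanh r = Real.log ((1+r)/(1-r)) := by unfold _root_.artanh; ring
  rw [h2, Real.sinh_eq, Real.exp_log hx, ← Real.log_inv, Real.exp_log (inv_pos.2 hx)]
  have h1r : (1:ℝ) - r ≠ 0 := by linarith
  have h1r' : (1:ℝ) + r ≠ 0 := by linarith
  have h1r2 : (1:ℝ) - r^2 ≠ 0 := by nlinarith
  field_simp
  ring

lemma cosh_two_artanh {r : ℝ} (hr : r ∈ Ioo (0:ℝ) 1) :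
    Real.cosh (2 * _root_.artanh r) = (1+r^2)/(1-r^2) := by
  have h0 := hr.1
  have h1 := hr.2
  have hx : (0:ℝ) < (1+r)/(1-r) := div_pos (by linarith) (by linarith)
  have h2 : 2 * _root_.artanh r = Real.log ((1+r)/(1-r)) := by unfold _root_.artanh; ring
  rw [h2, Real.cosh_eq, Real.exp_log hx, ← Real.log_inv, Real.exp_log (inv_pos.2 hx)]
  have h1r : (1:ℝ) - r ≠ 0 := by linarith
  have h1r' : (1:ℝ) + r ≠ 0 := by linarith
  have h1r2 : (1:ℝ) - r^2 ≠ 0 := by nlinarith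
  field_simp
  ring

-- the main bridge: r - (1-r^2) * artanh r > 0 and the function identity
lemma denom_pos {r : ℝ} (hr : r ∈ Ioo (0:ℝ) 1) : 0 < r - (1 - r^2) * _root_.artanh r := by
  have h0 := hr.1
  have h1 := hr.2
  have ha := _root_.artanh_pos_s6 hr
  have hs := ss_pos (show (0:ℝ) < 2 * _root_.artanh r by linarith)
  rw [sinh_two_artanh hr] at hs
  have h1r2 : (0:ℝ) < 1 - r^2 := by nlinarith
  have : 0 < 2*r/(1-r^2) - 2 * _root_.artanh r := hs
  have h2 : 0 < 2*r - 2*_root_.artanh r * (1-r^2) := by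
    have := mul_pos this h1r2
    calc (0:ℝ) < (2*r/(1-r^2) - 2 * _root_.artanh r) * (1-r^2) := this
    _ = 2*r - 2*_root_.artanh r * (1-r^2) := by field_simp
  linarith

lemma fid {r : ℝ} (hr : r ∈ Ioo (0:ℝ) 1) :
    ((1 - r^2) * _root_.artanh r / (r - (1 - r^2) * _root_.artanh r)) * Real.log (_root_.artanh r / r)
      = LL (2 * _root_.artanh r) / DD (2 * _root_.artanh r) := by
  have h0 := hr.1
  have h1 := hr.2
  have ha := _root_.artanh_pos_s6 hr
  have hd := denom_pos hr
  have h1r2 : (0:ℝ) < 1 - r^2 := by nlinarith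
  have hL : LL (2 * _root_.artanh r) = Real.log (_root_.artanh r / r) := by
    unfold LL
    rw [sinh_two_artanh hr, cosh_two_artanh hr]
    congr 1
    field_simp
    ring
  have hD : DD (2 * _root_.artanh r) = (r - (1 - r^2) * _root_.artanh r) / ((1 - r^2) * _root_.artanh r) := by
    unfold DD
    rw [sinh_two_artanh hr]
    rw [div_eq_div_iff (by positivity) (by positivity)]
    field_simp
  rw [hL, hD]
  rw [div_div_eq_mul_div, div_mul_eq_mul_div]
  rw [eq_comm, div_eq_div_iff (by positivity) (by positivity)]
  ring


lemma tendsto_psi : Tendsto (fun s : ℝ =>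
    (2 * Real.cosh s + s * Real.sinh s - 2) / (4 * s * Real.sinh s * Real.cosh s))
    (𝓝[>] (0:ℝ)) (𝓝 (1/2)) := by
  have hhalf : Tendsto (fun s : ℝ => s/2) (𝓝[>] (0:ℝ)) (𝓝[>] (0:ℝ)) := by
    rw [tendsto_nhdsWithin_iff]
    constructor
    · have : Tendsto (fun s : ℝ => s/2) (𝓝 (0:ℝ)) (𝓝 (0/2)) :=
        (continuous_id.div_const 2).continuousAt
      simpa using this.mono_left nhdsWithin_le_nhds
    · filter_upwards [self_mem_nhdsWithin] with s hs
      have : (0:ℝ) < s := hs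
      exact mem_Ioi.2 (by linarith)
  have hT : Tendsto (fun x : ℝ => Real.sinh x / (x * Real.cosh x)) (𝓝[>] (0:ℝ)) (𝓝 1) := by
    have hc : Tendsto (fun x : ℝ => Real.cosh x) (𝓝[>] (0:ℝ)) (𝓝 1) := by
      have : Tendsto Real.cosh (𝓝 (0:ℝ)) (𝓝 (Real.cosh 0)) := Real.continuous_cosh.continuousAt
      simpa using this.mono_left nhdsWithin_le_nhds
    have := tendsto_sinh_div_self.div hc one_ne_zero
    apply (by simpa [Pi.div_def] using this : Tendsto (fun x : ℝ => Real.sinh x / x / Real.cosh x)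
      (𝓝[>] (0:ℝ)) (𝓝 1)).congr'
    filter_upwards [self_mem_nhdsWithin] with x hx
    rw [div_div]
  have hfac : Tendsto (fun s : ℝ =>
      (1 + Real.sinh (s/2) / ((s/2) * Real.cosh (s/2))) * (1 / (4 * Real.cosh s)))
      (𝓝[>] (0:ℝ)) (𝓝 ((1+1) * (1/4))) := by
    have h1 : Tendsto (fun s : ℝ => 1 + Real.sinh (s/2) / ((s/2) * Real.cosh (s/2)))
        (𝓝[>] (0:ℝ)) (𝓝 (1+1)) := tendsto_const_nhds.add (hT.comp hhalf)
    have h2 : Tendsto (fun s : ℝ => 1 / (4 * Real.cosh s)) (𝓝[>] (0:ℝ)) (𝓝 (1/4)) := by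
      have : Tendsto (fun s : ℝ => 1 / (4 * Real.cosh s)) (𝓝 (0:ℝ))
          (𝓝 (1 / (4 * Real.cosh 0))) := by
        apply ContinuousAt.div continuousAt_const
        · exact (continuous_const.mul Real.continuous_cosh).continuousAt
        · simp [Real.cosh_zero]
      simpa using this.mono_left nhdsWithin_le_nhds
    exact h1.mul h2
  have : ((1:ℝ)+1) * (1/4) = 1/2 := by norm_num
  rw [this] at hfac
  apply hfac.congr'
  filter_upwards [self_mem_nhdsWithin] with s hs
  exact (psi_eq hs).symm

lemma tendsto_LD : Tendsto (fun s : ℝ => LL s / DD s) (𝓝[>] (0:ℝ)) (𝓝 (1/2)) := by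
  have hBB'ne : ∀ x ∈ Ioo (0:ℝ) 1, BB' x ≠ 0 := fun x hx => ne_of_gt (BB'_pos hx.1)
  have t3 : Tendsto (fun s : ℝ => AA' s / BB' s) (𝓝[>] (0:ℝ)) (𝓝 (1/2)) := by
    apply HasDerivAt.lhopital_zero_right_on_Ioo zero_lt_one
      (fun x _ => hasDerivAt_AA' x) (fun x _ => hasDerivAt_BB' x)
      (fun x hx => by
        have h1 : (0:ℝ) < x := hx.1
        have := Real.sinh_pos_iff.2 h1
        have := Real.cosh_pos x
        positivity)
      tendsto_AA' tendsto_BB' tendsto_psi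
  have t2 : Tendsto (fun s : ℝ => AA s / BB s) (𝓝[>] (0:ℝ)) (𝓝 (1/2)) :=
    HasDerivAt.lhopital_zero_right_on_Ioo zero_lt_one
      (fun x _ => hasDerivAt_AA x) (fun x _ => hasDerivAt_BB x)
      hBB'ne tendsto_AA tendsto_BB t3
  have t2' : Tendsto (fun s : ℝ => (1/s - 1/Real.sinh s) / ((s * Real.cosh s - Real.sinh s) / s^2))
      (𝓝[>] (0:ℝ)) (𝓝 (1/2)) := by
    apply t2.congr'
    filter_upwards [self_mem_nhdsWithin] with s hs
    have hs0 : (0:ℝ) < s := hs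
    have hsinh : 0 < Real.sinh s := Real.sinh_pos_iff.2 hs0
    have hsc := sc_pos hs0
    unfold AA BB
    rw [eq_comm, div_eq_div_iff (by positivity) (by positivity)]
    field_simp
  exact HasDerivAt.lhopital_zero_right_on_Ioo zero_lt_one
    (fun x hx => hasDerivAt_LL hx.1) (fun x hx => hasDerivAt_DD hx.1)
    (fun x hx => ne_of_gt (div_pos (sc_pos hx.1) (pow_pos hx.1 2)))
    tendsto_LL tendsto_DD t2'

lemma limit_zero : Tendsto (fun r : ℝ =>
    ((1 - r^2) * _root_.artanh r / (r - (1 - r^2) * _root_.artanh r)) * Real.log (_root_.artanh r / r))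
    (𝓝[>] (0:ℝ)) (𝓝 (1/2)) := by
  have hta : Tendsto (fun r : ℝ => 2 * _root_.artanh r) (𝓝[>] (0:ℝ)) (𝓝[>] (0:ℝ)) := by
    rw [tendsto_nhdsWithin_iff]
    constructor
    · have hq : ContinuousAt (fun r : ℝ => (1+r)/(1-r)) 0 := by
        apply ContinuousAt.div
        · fun_prop
        · fun_prop
        · norm_num
      have hl : ContinuousAt (fun r : ℝ => 2 * ((1/2) * Real.log ((1+r)/(1-r)))) 0 := by
        apply ContinuousAt.mul continuousAt_const
        apply ContinuousAt.mul continuousAt_const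
        exact (Real.continuousAt_log (by norm_num)).comp hq
      have h0 : Tendsto (fun r : ℝ => 2 * _root_.artanh r) (𝓝 (0:ℝ)) (𝓝 0) := by
        simpa [_root_.artanh, Real.log_one] using hl.tendsto
      exact h0.mono_left nhdsWithin_le_nhds
    · filter_upwards [Ioo_mem_nhdsGT_of_mem (by norm_num : (0:ℝ) ∈ Ico (0:ℝ) 1)] with r hr
      have := _root_.artanh_pos_s6 hr
      exact mem_Ioi.2 (by linarith)
  have := tendsto_LD.comp hta
  apply this.congr'
  filter_upwards [Ioo_mem_nhdsGT_of_mem (by norm_num : (0:ℝ) ∈ Ico (0:ℝ) 1)] with r hr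
  exact (fid hr).symm


lemma LD_bounds : ∀ s : ℝ, 13 ≤ s →
    LL s / DD s ∈ Icc (0:ℝ) (4 * (s^2 * Real.exp (-s))) := by
  intro s hs
  have hs0 : (0:ℝ) < s := by linarith
  have hsinh : 0 < Real.sinh s := Real.sinh_pos_iff.2 hs0
  have hcosh : 0 < Real.cosh s := Real.cosh_pos s
  have hself : s < Real.sinh s := Real.self_lt_sinh_iff.2 hs0
  have hcs : Real.cosh s - Real.sinh s = Real.exp (-s) := Real.cosh_sub_sinh s
  have hexpneg : Real.exp (-s) ≤ 1 := by rw [Real.exp_le_one_iff]; linarith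
  have hexpnegpos := Real.exp_pos (-s)
  have hss := ss_pos hs0
  have hDpos : 0 < DD s := div_pos hss hs0
  have hinner_pos : (0:ℝ) < s * (Real.cosh s + 1) / (2 * Real.sinh s) := by positivity
  have hinner_ge : (1:ℝ) ≤ s * (Real.cosh s + 1) / (2 * Real.sinh s) := by
    rw [le_div_iff₀ (by positivity)]
    nlinarith
  have hinner_le : s * (Real.cosh s + 1) / (2 * Real.sinh s) ≤ s := by
    rw [div_le_iff₀ (by positivity)]
    nlinarith
  have hLL0 : 0 ≤ LL s := Real.log_nonneg hinner_ge
  have hLLle : LL s ≤ s := by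
    calc LL s ≤ s * (Real.cosh s + 1) / (2 * Real.sinh s) - 1 :=
          Real.log_le_sub_one_of_pos hinner_pos
      _ ≤ s := by linarith
  have hexp2 : (1 + s/2)^2 ≤ Real.exp s := by
    have h := Real.add_one_le_exp (s/2)
    have h2 : Real.exp s = Real.exp (s/2) ^ 2 := by
      rw [← Real.exp_nat_mul]; push_cast; ring_nf
    rw [h2]
    nlinarith [Real.exp_pos (s/2)]
  have hsinh_lb : Real.exp s / 4 ≤ Real.sinh s - s := by
    rw [Real.sinh_eq]
    nlinarith
  have hexpspos := Real.exp_pos s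
  constructor
  · exact div_nonneg hLL0 hDpos.le
  · have e1 : LL s / DD s = LL s * s / (Real.sinh s - s) := by
      unfold DD
      rw [div_div_eq_mul_div]
    rw [e1]
    have step : LL s * s / (Real.sinh s - s) ≤ (s * s) / (Real.exp s / 4) := by
      apply div_le_div₀ (by positivity) (by nlinarith) (by positivity) hsinh_lb
    calc LL s * s / (Real.sinh s - s) ≤ (s * s) / (Real.exp s / 4) := step
      _ = 4 * (s^2 * Real.exp (-s)) := by
          rw [Real.exp_neg]
          field_simp

lemma tendsto_LD_atTop : Tendsto (fun s : ℝ => LL s / DD s) atTop (𝓝 0) := by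
  apply tendsto_of_tendsto_of_tendsto_of_le_of_le' tendsto_const_nhds
    (Tendsto.const_mul (4:ℝ) (Real.tendsto_pow_mul_exp_neg_atTop_nhds_zero 2) |>.congr (fun x => rfl)
      |> fun h => by simpa using h)
  · filter_upwards [eventually_ge_atTop (13:ℝ)] with s hs
    exact (LD_bounds s hs).1
  · filter_upwards [eventually_ge_atTop (13:ℝ)] with s hs
    exact (LD_bounds s hs).2

lemma limit_one : Tendsto (fun r : ℝ =>
    ((1 - r^2) * _root_.artanh r / (r - (1 - r^2) * _root_.artanh r)) * Real.log (_root_.artanh r / r))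
    (𝓝[<] (1:ℝ)) (𝓝 0) := by
  have h1 : Tendsto (fun r : ℝ => 1 - r) (𝓝[<] (1:ℝ)) (𝓝[>] (0:ℝ)) := by
    rw [tendsto_nhdsWithin_iff]
    constructor
    · have : Tendsto (fun r : ℝ => 1 - r) (𝓝 (1:ℝ)) (𝓝 (1 - 1)) :=
        (continuous_const.sub continuous_id).continuousAt
      simpa using this.mono_left nhdsWithin_le_nhds
    · filter_upwards [self_mem_nhdsWithin] with r hr
      have : r < 1 := hr
      exact mem_Ioi.2 (by linarith)
  have h2 : Tendsto (fun r : ℝ => (1 - r)⁻¹) (𝓝[<] (1:ℝ)) atTop :=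
    tendsto_inv_nhdsGT_zero.comp h1
  have h3 : Tendsto (fun r : ℝ => (1 + r) * (1 - r)⁻¹) (𝓝[<] (1:ℝ)) atTop := by
    apply Filter.Tendsto.pos_mul_atTop (show (0:ℝ) < 2 by norm_num) _ h2
    have h : Tendsto (fun r : ℝ => 1 + r) (𝓝 (1:ℝ)) (𝓝 (1 + 1)) :=
      (continuous_const.add continuous_id).continuousAt
    have h' : Tendsto (fun r : ℝ => 1 + r) (𝓝[<] (1:ℝ)) (𝓝 2) := by
      have := h.mono_left (nhdsWithin_le_nhds (s := Iio (1:ℝ)))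
      norm_num at this
      exact this
    exact h'
  have h4 : Tendsto (fun r : ℝ => Real.log ((1 + r) / (1 - r))) (𝓝[<] (1:ℝ)) atTop := by
    have := Real.tendsto_log_atTop.comp h3
    apply this.congr
    intro r
    simp [div_eq_mul_inv]
  have h5 : Tendsto (fun r : ℝ => 2 * _root_.artanh r) (𝓝[<] (1:ℝ)) atTop := by
    have := h4.const_mul_atTop (show (0:ℝ) < 1 by norm_num)
    apply this.congr
    intro r
    unfold _root_.artanh
    ring
  have := tendsto_LD_atTop.comp h5
  apply this.congr'
  filter_upwards [Ioo_mem_nhdsLT_of_mem (by norm_num : (1:ℝ) ∈ Ioc (0:ℝ) 1)] with r hr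
  exact (fid hr).symm


theorem stmt6 :
    StrictAntiOn (fun r : ℝ =>
      ((1 - r^2) * _root_.artanh r / (r - (1 - r^2) * _root_.artanh r)) * Real.log (_root_.artanh r / r)) (Ioo 0 1) ∧
    Tendsto (fun r : ℝ =>
      ((1 - r^2) * _root_.artanh r / (r - (1 - r^2) * _root_.artanh r)) * Real.log (_root_.artanh r / r)) (𝓝[>] 0) (𝓝 (1/2)) ∧
    Tendsto (fun r : ℝ =>
      ((1 - r^2) * _root_.artanh r / (r - (1 - r^2) * _root_.artanh r)) * Real.log (_root_.artanh r / r)) (𝓝[<] 1) (𝓝 0) := by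
  refine ⟨?_, limit_zero, limit_one⟩
  intro x hx y hy hxy
  simp only
  rw [fid hx, fid hy]
  exact anti_LD (mem_Ioi.2 (by linarith [_root_.artanh_pos_s6 hx]))
    (mem_Ioi.2 (by linarith [_root_.artanh_pos_s6 hy]))
    (by have := artanh_strictMono hx hy hxy; linarith)
end
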